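/- Let δ : [0,1] → [0,1] be the diagonal section of some 2-copula such that t ↦ δ(t)/t is increasing on (0,1] and t ↦ δ(t)/t² is decreasing on (0,1], and let C_SL be the associated semilinear copula C_SL(u1,u2) = min(u1,u2)·δ(max(u1,u2))/max(u1,u2) (with C_SL(0,0) = 0). Then the limit c := lim_{t↓0} δ(t)/t exists, C_SL admits a tail dependence function, and Λ(w1, w2; C_SL) = min(w1, w2)·c for all (w1,w2) ∈ [0,∞)². -/

import Mathlib

open Filter Set

/-- A bivariate copula: grounded, uniform margins, 2-increasing. -/
def IsCopula2 (C : ℝ → ℝ → ℝ) : Prop :=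
  (∀ u ∈ Icc (0:ℝ) 1, C u 0 = 0 ∧ C 0 u = 0) ∧
  (∀ u ∈ Icc (0:ℝ) 1, C u 1 = u ∧ C 1 u = u) ∧
  (∀ a1 b1 a2 b2 : ℝ, 0 ≤ a1 → a1 ≤ b1 → b1 ≤ 1 → 0 ≤ a2 → a2 ≤ b2 → b2 ≤ 1 →
    0 ≤ C b1 b2 - C a1 b2 - C b1 a2 + C a1 a2)

/-- The (lower) tail dependence function of a bivariate copula. -/
def HasTDF2 (C : ℝ → ℝ → ℝ) (Λ : ℝ → ℝ → ℝ) : Prop :=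
  ∀ w1 w2 : ℝ, 0 ≤ w1 → 0 ≤ w2 →
    Tendsto (fun s : ℝ => C (s * w1) (s * w2) / s) (nhdsWithin 0 (Ioi 0)) (nhds (Λ w1 w2))

/-- `δ` is the diagonal section of some 2-copula. -/
def IsDiagonal (δ : ℝ → ℝ) : Prop :=
  ∃ D : ℝ → ℝ → ℝ, IsCopula2 D ∧ ∀ t ∈ Icc (0:ℝ) 1, δ t = D t t

/-- The semilinear copula of a diagonal `δ` (with `δ(t)/t` increasing and
`δ(t)/t²` decreasing on `(0,1]`) admits the tail dependence function
`Λ(w1,w2) = min w1 w2 · lim_{t↓0} δ(t)/t`. -/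
theorem stmt10 (δ : ℝ → ℝ) (hδ : IsDiagonal δ)
    (hmono : MonotoneOn (fun t => δ t / t) (Ioc (0:ℝ) 1))
    (hanti : AntitoneOn (fun t => δ t / t ^ 2) (Ioc (0:ℝ) 1))
    (C : ℝ → ℝ → ℝ)
    (hC : ∀ u1 u2 : ℝ, ¬(u1 = 0 ∧ u2 = 0) →
      C u1 u2 = min u1 u2 * δ (max u1 u2) / max u1 u2)
    (hC0 : C 0 0 = 0) :
    ∃ c : ℝ, Tendsto (fun t : ℝ => δ t / t) (nhdsWithin 0 (Ioi 0)) (nhds c) ∧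
      ∀ w1 w2 : ℝ, 0 ≤ w1 → 0 ≤ w2 →
        Tendsto (fun s : ℝ => C (s * w1) (s * w2) / s) (nhdsWithin 0 (Ioi 0))
          (nhds (min w1 w2 * c)) := by
  obtain ⟨D, ⟨hgr, hmar, hinc⟩, hdiag⟩ := hδ
  -- δ nonneg on [0,1]
  have hδ0 : ∀ t ∈ Icc (0:ℝ) 1, 0 ≤ δ t := by
    intro t ht
    rw [hdiag t ht]
    have h := hinc 0 t 0 t le_rfl ht.1 ht.2 le_rfl ht.1 ht.2
    have h1 := (hgr t ht).1
    have h2 := (hgr t ht).2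
    have h3 := (hgr 0 ⟨le_rfl, one_pos.le⟩).1
    linarith
  have hnn : ∀ t ∈ Ioo (0:ℝ) 1, 0 ≤ δ t / t := by
    intro t ht
    exact div_nonneg (hδ0 t ⟨ht.1.le, ht.2.le⟩) ht.1.le
  have hmono' : MonotoneOn (fun t => δ t / t) (Ioo (0:ℝ) 1) :=
    hmono.mono (fun x hx => ⟨hx.1, hx.2.le⟩)
  have hbdd : BddBelow ((fun t => δ t / t) '' Ioo (0:ℝ) 1) := by
    refine ⟨0, ?_⟩
    rintro y ⟨t, ht, rfl⟩
    exact hnn t ht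
  have hne : (Ioo (0:ℝ) 1).Nonempty := ⟨1/2, by norm_num⟩
  have hlim := hmono'.tendsto_nhdsWithin_Ioo_right hne hbdd
  set c := sInf ((fun t => δ t / t) '' Ioo (0:ℝ) 1) with hc
  have hlim' : Tendsto (fun t : ℝ => δ t / t) (nhdsWithin 0 (Ioi 0)) (nhds c) := hlim
  refine ⟨c, hlim', ?_⟩
  intro w1 w2 hw1 hw2
  rcases eq_or_lt_of_le (le_max_iff.mpr (Or.inl hw1) : (0:ℝ) ≤ max w1 w2) with hM | hM
  · -- w1 = w2 = 0
    have h1 : w1 = 0 := le_antisymm ((le_max_left w1 w2).trans hM.ge) hw1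
    have h2 : w2 = 0 := le_antisymm ((le_max_right w1 w2).trans hM.ge) hw2
    subst h1; subst h2
    simp only [mul_zero, hC0, zero_div, min_self, zero_mul]
    exact tendsto_const_nhds
  · set M := max w1 w2 with hMdef
    have key : ∀ᶠ s in nhdsWithin (0:ℝ) (Ioi 0),
        C (s * w1) (s * w2) / s = min w1 w2 * (δ (s * M) / (s * M)) := by
      filter_upwards [self_mem_nhdsWithin] with s hs
      have hs' : (0:ℝ) < s := hs
      have hne0 : ¬(s * w1 = 0 ∧ s * w2 = 0) := by
        rintro ⟨h1, h2⟩
        have hw1' : w1 = 0 := (mul_eq_zero.mp h1).resolve_left hs'.ne'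
        have hw2' : w2 = 0 := (mul_eq_zero.mp h2).resolve_left hs'.ne'
        rw [hw1', hw2', max_self] at hMdef
        rw [hMdef] at hM
        exact lt_irrefl _ hM
      rw [hC _ _ hne0]
      have hmin : min (s * w1) (s * w2) = s * min w1 w2 := by
        rcases le_total w1 w2 with h | h
        · rw [min_eq_left (by nlinarith), min_eq_left h]
        · rw [min_eq_right (by nlinarith), min_eq_right h]
      have hmax : max (s * w1) (s * w2) = s * M := by
        rcases le_total w1 w2 with h | h
        · rw [max_eq_right (by nlinarith)]; simp [M, max_eq_right h]
        · rw [max_eq_left (by nlinarith)]; simp [M, max_eq_left h]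
      rw [hmin, hmax]
      field_simp
    have hcomp : Tendsto (fun s : ℝ => δ (s * M) / (s * M)) (nhdsWithin 0 (Ioi 0)) (nhds c) := by
      apply hlim'.comp
      apply tendsto_nhdsWithin_of_tendsto_nhds_of_eventually_within
      · have : Tendsto (fun s : ℝ => s * M) (nhds 0) (nhds (0 * M)) :=
          (tendsto_id.mul_const M)
        simpa using this.mono_left nhdsWithin_le_nhds
      · filter_upwards [self_mem_nhdsWithin] with s hs
        exact mul_pos hs hM
    exact Tendsto.congr' (key.mono fun _ h => h.symm) (hcomp.const_mul _)
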